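/- Let X be a Tychonoff space and μ : C*(X) → ℝ a functional. Then μ is normed, weakly additive, preserves max and weakly preserves min (i.e. μ ∈ R_max(X)) if and only if there exists a nonempty compact set F ⊆ βX such that F = S(μ) and μ(f) = sup{βf(x) : x ∈ F} for all f ∈ C*(X). Moreover, μ ∈ R_max(X)_c (i.e. additionally S(μ) ⊆ η(X)) if and only if such an F exists with F ⊆ η(X). -/

import Mathlib

open Set

/-- The Čech–Stone extension `βf : βX → ℝ` of a bounded continuous function `f : X → ℝ`
(obtained by extending `f`, viewed as a map into the compact interval `[-‖f‖, ‖f‖]`,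
over the Stone–Čech compactification). -/
noncomputable def betaExt {X : Type*} [TopologicalSpace X] (f : BoundedContinuousFunction X ℝ) :
    StoneCech X → ℝ :=
  Subtype.val ∘ stoneCechExtend
    (Continuous.subtype_mk f.continuous
      (fun x => Set.mem_Icc.mpr (abs_le.mp (Real.norm_eq_abs (f x) ▸ f.norm_coe_le_norm x)))
      : Continuous fun x => (⟨f x, _⟩ : Set.Icc (-‖f‖) ‖f‖))

variable {X : Type*} [TopologicalSpace X]

/-- `μ` is *normed*: `μ 1 = 1`. -/
def BNormed (μ : BoundedContinuousFunction X ℝ → ℝ) : Prop := μ 1 = 1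

/-- `μ` is *weakly additive*: `μ (f + c·1) = μ f + c`. -/
def BWeaklyAdditive (μ : BoundedContinuousFunction X ℝ → ℝ) : Prop :=
  ∀ (f : BoundedContinuousFunction X ℝ) (c : ℝ),
    μ (f + BoundedContinuousFunction.const X c) = μ f + c

/-- `μ` *preserves min*. -/
def BPreservesMin (μ : BoundedContinuousFunction X ℝ → ℝ) : Prop :=
  ∀ f g : BoundedContinuousFunction X ℝ, μ (f ⊓ g) = min (μ f) (μ g)

/-- `μ` *preserves max*. -/
def BPreservesMax (μ : BoundedContinuousFunction X ℝ → ℝ) : Prop :=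
  ∀ f g : BoundedContinuousFunction X ℝ, μ (f ⊔ g) = max (μ f) (μ g)

/-- `μ` *weakly preserves min*: `μ (min{f, c·1}) = min{μ f, c}`. -/
def BWeaklyPreservesMin (μ : BoundedContinuousFunction X ℝ → ℝ) : Prop :=
  ∀ (f : BoundedContinuousFunction X ℝ) (c : ℝ),
    μ (f ⊓ BoundedContinuousFunction.const X c) = min (μ f) c

/-- `μ` *weakly preserves max*: `μ (max{f, c·1}) = max{μ f, c}`. -/
def BWeaklyPreservesMax (μ : BoundedContinuousFunction X ℝ → ℝ) : Prop :=
  ∀ (f : BoundedContinuousFunction X ℝ) (c : ℝ),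
    μ (f ⊔ BoundedContinuousFunction.const X c) = max (μ f) c

/-- The support `S(μ) ⊆ βX` of a functional `μ` on `C*(X)`: points `p ∈ βX` such that every
open neighbourhood `O` of `p` admits `f, g ∈ C*(X)` with `βf = βg` off `O` and `μ f ≠ μ g`. -/
def betaSupport (μ : BoundedContinuousFunction X ℝ → ℝ) : Set (StoneCech X) :=
  {p | ∀ O : Set (StoneCech X), IsOpen O → p ∈ O →
    ∃ f g : BoundedContinuousFunction X ℝ,
      (∀ q ∉ O, betaExt f q = betaExt g q) ∧ μ f ≠ μ g}

/-- `R_min(X)`: normed, weakly additive functionals preserving min and weakly preserving max. -/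
def RMin (X : Type*) [TopologicalSpace X] : Set (BoundedContinuousFunction X ℝ → ℝ) :=
  {μ | BNormed μ ∧ BWeaklyAdditive μ ∧ BPreservesMin μ ∧ BWeaklyPreservesMax μ}

/-- `R_max(X)`: normed, weakly additive functionals preserving max and weakly preserving min. -/
def RMax (X : Type*) [TopologicalSpace X] : Set (BoundedContinuousFunction X ℝ → ℝ) :=
  {μ | BNormed μ ∧ BWeaklyAdditive μ ∧ BPreservesMax μ ∧ BWeaklyPreservesMin μ}

/-- `R_min(X)_c`: members of `R_min(X)` with compact support, i.e. `∅ ≠ S(μ) ⊆ η(X)`. -/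
def RMinC (X : Type*) [TopologicalSpace X] : Set (BoundedContinuousFunction X ℝ → ℝ) :=
  {μ | μ ∈ RMin X ∧ (betaSupport μ).Nonempty ∧
    betaSupport μ ⊆ Set.range (stoneCechUnit : X → StoneCech X)}

/-- `R_max(X)_c`: members of `R_max(X)` with compact support, i.e. `∅ ≠ S(μ) ⊆ η(X)`. -/
def RMaxC (X : Type*) [TopologicalSpace X] : Set (BoundedContinuousFunction X ℝ → ℝ) :=
  {μ | μ ∈ RMax X ∧ (betaSupport μ).Nonempty ∧
    betaSupport μ ⊆ Set.range (stoneCechUnit : X → StoneCech X)}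

section AuxBeta

variable {X : Type*} [TopologicalSpace X]

lemma betaExt_continuous (f : BoundedContinuousFunction X ℝ) : Continuous (betaExt f) :=
  continuous_subtype_val.comp (continuous_stoneCechExtend _)

lemma betaExt_unit (f : BoundedContinuousFunction X ℝ) (x : X) :
    betaExt f (stoneCechUnit x) = f x :=
  congrArg Subtype.val (congrFun (stoneCechExtend_extends _) x)

lemma betaExt_mem (f : BoundedContinuousFunction X ℝ) (q : StoneCech X) :
    betaExt f q ∈ Set.Icc (-‖f‖) ‖f‖ := by
  have : betaExt f q = (stoneCechExtend
    (Continuous.subtype_mk f.continuous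
      (fun x => Set.mem_Icc.mpr (abs_le.mp (Real.norm_eq_abs (f x) ▸ f.norm_coe_le_norm x)))
      : Continuous fun x => (⟨f x, _⟩ : Set.Icc (-‖f‖) ‖f‖)) q).val := rfl
  rw [this]
  exact Subtype.coe_prop _

lemma betaExt_eq (f : BoundedContinuousFunction X ℝ) {φ : StoneCech X → ℝ}
    (hφ : Continuous φ) (h : ∀ x, φ (stoneCechUnit x) = f x) : betaExt f = φ :=
  stoneCech_hom_ext (betaExt_continuous f) hφ
    (funext fun x => by simp [Function.comp, betaExt_unit, h])

lemma betaExt_zero : betaExt (0 : BoundedContinuousFunction X ℝ) = fun _ => 0 :=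
  betaExt_eq _ continuous_const (fun _ => by simp)

lemma betaExt_one : betaExt (1 : BoundedContinuousFunction X ℝ) = fun _ => 1 :=
  betaExt_eq _ continuous_const (fun _ => by simp)

lemma betaExt_add_const (f : BoundedContinuousFunction X ℝ) (c : ℝ) :
    betaExt (f + BoundedContinuousFunction.const X c) = fun q => betaExt f q + c :=
  betaExt_eq _ ((betaExt_continuous f).add continuous_const)
    (fun x => by simp [betaExt_unit])

lemma betaExt_sup (f g : BoundedContinuousFunction X ℝ) :
    betaExt (f ⊔ g) = fun q => max (betaExt f q) (betaExt g q) :=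
  betaExt_eq _ ((betaExt_continuous f).max (betaExt_continuous g))
    (fun x => by simp [betaExt_unit])

lemma betaExt_inf_const (f : BoundedContinuousFunction X ℝ) (c : ℝ) :
    betaExt (f ⊓ BoundedContinuousFunction.const X c) = fun q => min (betaExt f q) c :=
  betaExt_eq _ ((betaExt_continuous f).min continuous_const)
    (fun x => by simp [betaExt_unit])

lemma exists_isGreatest_betaSup {F : Set (StoneCech X)} (hF : IsCompact F) (hne : F.Nonempty)
    {φ : StoneCech X → ℝ} (hφ : Continuous φ) :
    ∃ p ∈ F, (∀ q ∈ F, φ q ≤ φ p) ∧ sSup (φ '' F) = φ p := by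
  obtain ⟨p, hp, hmax⟩ := hF.exists_isMaxOn hne hφ.continuousOn
  refine ⟨p, hp, hmax, IsGreatest.csSup_eq ⟨⟨p, hp, rfl⟩, ?_⟩⟩
  rintro _ ⟨q, hq, rfl⟩
  exact hmax hq

end AuxBeta

section MainAux

variable {X : Type*} [TopologicalSpace X]

lemma rmax_of_rep {μ : BoundedContinuousFunction X ℝ → ℝ} {F : Set (StoneCech X)}
    (hne : F.Nonempty) (hF : IsCompact F)
    (hrep : ∀ f, μ f = sSup (betaExt f '' F)) : μ ∈ RMax X := by
  refine ⟨?_, ?_, ?_, ?_⟩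
  · show μ 1 = 1
    rw [hrep, betaExt_one, hne.image_const, csSup_singleton]
  · intro f c
    obtain ⟨p, hp, hmax, hsup⟩ := exists_isGreatest_betaSup hF hne
      (betaExt_continuous (f + BoundedContinuousFunction.const X c))
    obtain ⟨p', hp', hmax', hsup'⟩ := exists_isGreatest_betaSup hF hne (betaExt_continuous f)
    rw [hrep, hrep, hsup, hsup']
    simp only [betaExt_add_const] at hmax ⊢
    have h1 : betaExt f p ≤ betaExt f p' := hmax' p hp
    have h2 : betaExt f p' + c ≤ betaExt f p + c := hmax p' hp'
    linarith
  · intro f g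
    obtain ⟨p, hp, hmax, hsup⟩ := exists_isGreatest_betaSup hF hne (betaExt_continuous (f ⊔ g))
    obtain ⟨pf, hpf, hmaxf, hsupf⟩ := exists_isGreatest_betaSup hF hne (betaExt_continuous f)
    obtain ⟨pg, hpg, hmaxg, hsupg⟩ := exists_isGreatest_betaSup hF hne (betaExt_continuous g)
    rw [hrep, hrep, hrep, hsup, hsupf, hsupg]
    simp only [betaExt_sup] at hmax ⊢
    refine le_antisymm (max_le_max (hmaxf p hp) (hmaxg p hp)) (max_le ?_ ?_)
    · exact le_trans (le_max_left _ _) (hmax pf hpf)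
    · exact le_trans (le_max_right _ _) (hmax pg hpg)
  · intro f c
    obtain ⟨p, hp, hmax, hsup⟩ := exists_isGreatest_betaSup hF hne
      (betaExt_continuous (f ⊓ BoundedContinuousFunction.const X c))
    obtain ⟨p', hp', hmax', hsup'⟩ := exists_isGreatest_betaSup hF hne (betaExt_continuous f)
    rw [hrep, hrep, hsup, hsup']
    simp only [betaExt_inf_const] at hmax ⊢
    exact le_antisymm (min_le_min (hmax' p hp) le_rfl) (hmax p' hp')

lemma rmax_rep {μ : BoundedContinuousFunction X ℝ → ℝ} (hμ : μ ∈ RMax X) :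
    ∃ F : Set (StoneCech X), F.Nonempty ∧ IsCompact F ∧ F = betaSupport μ ∧
      ∀ f : BoundedContinuousFunction X ℝ, μ f = sSup (betaExt f '' F) := by
  obtain ⟨hn, hw, hmx, hwm⟩ := hμ
  -- basic consequences
  have hzero : μ 0 = 0 := by
    have h := hw 0 1
    have e : (0 : BoundedContinuousFunction X ℝ) + BoundedContinuousFunction.const X 1 = 1 := by
      ext x; simp
    rw [e, hn] at h
    linarith
  have hconst : ∀ c : ℝ, μ (BoundedContinuousFunction.const X c) = c := by
    intro c
    have h := hw 0 c
    rwa [zero_add, hzero, zero_add] at h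
  have hmono : ∀ f g : BoundedContinuousFunction X ℝ, (∀ x, f x ≤ g x) → μ f ≤ μ g := by
    intro f g h
    have e : f ⊔ g = g := by
      ext x
      simp only [BoundedContinuousFunction.coe_sup, Pi.sup_apply]
      exact sup_eq_right.2 (h x)
    have := hmx f g
    rw [e] at this
    exact le_trans (le_max_left _ _) this.ge
  -- the key pointwise lemma
  have hstar : ∀ (f g : BoundedContinuousFunction X ℝ) (ε : ℝ), 0 < ε → μ g = 0 →
      ∃ x, g x ≤ ε ∧ μ f - ε ≤ f x := by
    intro f g ε hε hg
    by_contra hcon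
    push_neg at hcon
    have key : ∀ x, (f ⊓ BoundedContinuousFunction.const X (μ f)) x ≤
        ((BoundedContinuousFunction.const X (μ f - ε)) ⊔
          ((g ⊓ BoundedContinuousFunction.const X ε) +
            BoundedContinuousFunction.const X (μ f - ε))) x := by
      intro x
      simp only [BoundedContinuousFunction.coe_sup, BoundedContinuousFunction.coe_inf,
        BoundedContinuousFunction.coe_add, BoundedContinuousFunction.const_apply,
        Pi.sup_apply, Pi.inf_apply, Pi.add_apply]
      by_cases hx : g x ≤ ε
      · have hfx := hcon x hx
        have h1 : min (f x) (μ f) ≤ μ f - ε := le_trans (min_le_left _ _) hfx.le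
        exact le_trans h1 (le_max_left _ _)
      · push_neg at hx
        have h1 : min (g x) ε = ε := min_eq_right hx.le
        have h2 : min (f x) (μ f) ≤ μ f := min_le_right _ _
        have h3 := le_max_right (μ f - ε) (min (g x) ε + (μ f - ε))
        linarith
    have h1 : μ (f ⊓ BoundedContinuousFunction.const X (μ f)) = μ f := by
      rw [hwm, min_self]
    have h2 : μ ((BoundedContinuousFunction.const X (μ f - ε)) ⊔
        ((g ⊓ BoundedContinuousFunction.const X ε) +
          BoundedContinuousFunction.const X (μ f - ε))) = μ f - ε := by
      rw [hmx, hconst, hw, hwm, hg, min_eq_left hε.le, zero_add, max_self]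
    have := hmono _ _ key
    rw [h1, h2] at this
    linarith
  -- the support set
  set F : Set (StoneCech X) := {p | ∀ h : BoundedContinuousFunction X ℝ, betaExt h p ≤ μ h}
    with hFdef
  have hFclosed : IsClosed F := by
    have e : F = ⋂ h : BoundedContinuousFunction X ℝ, {p | betaExt h p ≤ μ h} := by
      ext p; simp [hFdef]
    rw [e]
    exact isClosed_iInter fun h => isClosed_le (betaExt_continuous h) continuous_const
  have hFcompact : IsCompact F := hFclosed.isCompact
  -- every value is attained on F
  have hkey : ∀ f : BoundedContinuousFunction X ℝ,
      ∃ p, p ∈ F ∧ μ f ≤ betaExt f p := by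
    intro f
    haveI : Nonempty {gε : BoundedContinuousFunction X ℝ × ℝ // μ gε.1 = 0 ∧ 0 < gε.2} :=
      ⟨⟨⟨0, 1⟩, hzero, one_pos⟩⟩
    let S : {gε : BoundedContinuousFunction X ℝ × ℝ // μ gε.1 = 0 ∧ 0 < gε.2} →
        Set (StoneCech X) :=
      fun i => {p | betaExt i.1.1 p ≤ i.1.2 ∧ μ f - i.1.2 ≤ betaExt f p}
    have hScl : ∀ i, IsClosed (S i) := by
      intro i
      have e : S i = {p | betaExt i.1.1 p ≤ i.1.2} ∩ {p | μ f - i.1.2 ≤ betaExt f p} := rfl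
      rw [e]
      exact (isClosed_le (betaExt_continuous _) continuous_const).inter
        (isClosed_le continuous_const (betaExt_continuous f))
    have hSne : ∀ i, (S i).Nonempty := by
      rintro ⟨⟨g, ε⟩, hg, hε⟩
      obtain ⟨x, hx1, hx2⟩ := hstar f g ε hε hg
      exact ⟨stoneCechUnit x, by simp only [S, Set.mem_setOf_eq, betaExt_unit]; exact ⟨hx1, hx2⟩⟩
    have hdir : Directed (· ⊇ ·) S := by
      rintro ⟨⟨g₁, ε₁⟩, hg₁, hε₁⟩ ⟨⟨g₂, ε₂⟩, hg₂, hε₂⟩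
      refine ⟨⟨⟨g₁ ⊔ g₂, min ε₁ ε₂⟩, by rw [hmx, hg₁, hg₂, max_self], lt_min hε₁ hε₂⟩, ?_, ?_⟩
      · rintro p ⟨h1, h2⟩
        have hle : betaExt g₁ p ≤ betaExt (g₁ ⊔ g₂) p := by
          rw [betaExt_sup]; exact le_max_left _ _
        constructor
        · exact le_trans hle (le_trans h1 (min_le_left _ _))
        · have := min_le_left ε₁ ε₂; dsimp only at h2 ⊢; linarith
      · rintro p ⟨h1, h2⟩
        have hle : betaExt g₂ p ≤ betaExt (g₁ ⊔ g₂) p := by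
          rw [betaExt_sup]; exact le_max_right _ _
        constructor
        · exact le_trans hle (le_trans h1 (min_le_right _ _))
        · have := min_le_right ε₁ ε₂; dsimp only at h2 ⊢; linarith
    obtain ⟨p, hp⟩ := IsCompact.nonempty_iInter_of_directed_nonempty_isCompact_isClosed
      S hdir hSne (fun i => (hScl i).isCompact) hScl
    simp only [Set.mem_iInter] at hp
    refine ⟨p, ?_, ?_⟩
    · intro h
      have hg0 : μ (h + BoundedContinuousFunction.const X (-(μ h))) = 0 := by
        rw [hw]; ring
      have hb : ∀ ε : ℝ, 0 < ε → betaExt (h + BoundedContinuousFunction.const X (-(μ h))) p ≤ ε :=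
        fun ε hε => (hp ⟨⟨_, ε⟩, hg0, hε⟩).1
      have h0 : betaExt (h + BoundedContinuousFunction.const X (-(μ h))) p ≤ 0 := by
        by_contra hcon
        push_neg at hcon
        have := hb _ (half_pos hcon)
        linarith
      rw [betaExt_add_const] at h0
      simp only at h0
      linarith
    · have hb : ∀ ε : ℝ, 0 < ε → μ f - ε ≤ betaExt f p :=
        fun ε hε => (hp ⟨⟨0, ε⟩, hzero, hε⟩).2
      by_contra hcon
      push_neg at hcon
      have := hb _ (by linarith : (0:ℝ) < (μ f - betaExt f p) / 2)
      linarith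
  obtain ⟨p₀, hp₀F, _⟩ := hkey 0
  have hFne : F.Nonempty := ⟨p₀, hp₀F⟩
  have hrep : ∀ f : BoundedContinuousFunction X ℝ, μ f = sSup (betaExt f '' F) := by
    intro f
    obtain ⟨p, hpF, hpf⟩ := hkey f
    have hval : betaExt f p = μ f := le_antisymm (hpF f) hpf
    symm
    apply IsGreatest.csSup_eq
    refine ⟨⟨p, hpF, hval⟩, ?_⟩
    rintro _ ⟨q, hq, rfl⟩
    exact hq f
  refine ⟨F, hFne, hFcompact, ?_, hrep⟩
  -- F is the support
  apply Set.Subset.antisymm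
  · -- F ⊆ betaSupport μ
    intro p hpF
    intro O hO hpO
    obtain ⟨Φ, hΦ0, hΦ1, hΦmem⟩ := exists_continuous_zero_one_of_isClosed
      hO.isClosed_compl isClosed_singleton
      (Set.disjoint_singleton_right.mpr (by simpa using hpO))
    have hbd : ∀ x y : X, dist (Φ (stoneCechUnit x)) (Φ (stoneCechUnit y)) ≤ 1 := by
      intro x y
      obtain ⟨hx1, hx2⟩ := hΦmem (stoneCechUnit x)
      obtain ⟨hy1, hy2⟩ := hΦmem (stoneCechUnit y)
      rw [Real.dist_eq, abs_sub_le_iff]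
      constructor <;> linarith
    set ff : BoundedContinuousFunction X ℝ :=
      ⟨⟨fun x => Φ (stoneCechUnit x), Φ.continuous.comp continuous_stoneCechUnit⟩, 1, hbd⟩
      with hffdef
    have hfb : betaExt ff = fun q => Φ q := betaExt_eq _ Φ.continuous (fun x => rfl)
    refine ⟨ff, 0, ?_, ?_⟩
    · intro q hq
      simp only [hfb, betaExt_zero]
      exact hΦ0 hq
    · have hge : (1:ℝ) ≤ μ ff := by
        rw [hrep]
        refine le_csSup ⟨1, ?_⟩ ⟨p, hpF, ?_⟩
        · rintro _ ⟨q, hq, rfl⟩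
          simp only [hfb]
          exact (hΦmem q).2
        · simp only [hfb]
          exact hΦ1 rfl
      rw [hzero]
      intro hcon
      rw [hcon] at hge
      linarith
  · -- betaSupport μ ⊆ F
    intro p hp
    by_contra hpF
    obtain ⟨f, g, hfg, hne'⟩ := hp Fᶜ hFclosed.isOpen_compl hpF
    apply hne'
    rw [hrep f, hrep g]
    congr 1
    apply Set.image_congr
    intro q hq
    exact hfg q (by simpa using hq)

end MainAux

/-- `μ ∈ R_max(X)` iff there is a nonempty compact `F ⊆ βX` with `F = S(μ)` and
`μ f = sup {βf p : p ∈ F}` for all `f ∈ C*(X)`; moreover `μ ∈ R_max(X)_c` iff such an `F`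
exists contained in `η(X)`. -/
theorem statement8 {X : Type*} [TopologicalSpace X] [T35Space X]
    (μ : BoundedContinuousFunction X ℝ → ℝ) :
    (μ ∈ RMax X ↔
      ∃ F : Set (StoneCech X), F.Nonempty ∧ IsCompact F ∧ F = betaSupport μ ∧
        ∀ f : BoundedContinuousFunction X ℝ, μ f = sSup (betaExt f '' F)) ∧
    (μ ∈ RMaxC X ↔
      ∃ F : Set (StoneCech X), F.Nonempty ∧ IsCompact F ∧
        F ⊆ Set.range (stoneCechUnit : X → StoneCech X) ∧ F = betaSupport μ ∧
        ∀ f : BoundedContinuousFunction X ℝ, μ f = sSup (betaExt f '' F)) := by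
  have main : μ ∈ RMax X ↔
      ∃ F : Set (StoneCech X), F.Nonempty ∧ IsCompact F ∧ F = betaSupport μ ∧
        ∀ f : BoundedContinuousFunction X ℝ, μ f = sSup (betaExt f '' F) := by
    constructor
    · exact rmax_rep
    · rintro ⟨F, hne, hc, -, hrep⟩
      exact rmax_of_rep hne hc hrep
  refine ⟨main, ?_, ?_⟩
  · rintro ⟨hμ, hsne, hsub⟩
    obtain ⟨F, hne, hc, hFs, hrep⟩ := main.1 hμ
    exact ⟨F, hne, hc, hFs ▸ hsub, hFs, hrep⟩
  · rintro ⟨F, hne, hc, hsub, hFs, hrep⟩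
    exact ⟨main.2 ⟨F, hne, hc, hFs, hrep⟩, hFs ▸ hne, hFs ▸ hsub⟩
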